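/- Consider the hazard model λ(t; a, x) = λ₀(t)·exp[μ₀(x) + 1{t ≥ a}·Q(a − d₀(x))·H₀(x)] with λ₀ ≥ 0, H₀ ≥ 0, and assume Q(u) ≥ Q(0) for all u ∈ ℝ. Let f_X : ℝ^q → [0, ∞) be measurable and integrable, and for a measurable treatment-initiation regime d : ℝ^q → [0, a₀] define the value V(d) = ∫_{ℝ^q} ∫_{a₀}^{τ} exp( − ∫_{a₀}^{t} λ(u; d(x), x) du ) f_X(x) dt dx. Then V(d) ≤ V(d₀) for every measurable d : ℝ^q → [0, a₀]; i.e., d₀ maximizes the value function based on restricted mean residual lifetime. -/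

import Mathlib

open MeasureTheory

set_option maxHeartbeats 1000000 in
/-- Under the hazard model
`λ(t; a, x) = λ₀(t) · exp(μ₀(x) + 1{t ≥ a} · Q(a − d₀(x)) · H₀(x))`
with `λ₀ ≥ 0`, `H₀ ≥ 0` and `Q(u) ≥ Q(0)` for all `u`, the regime `d₀`
maximizes the value function based on restricted mean residual lifetime
`V(d) = ∫∫_{a₀}^{τ} exp(−∫_{a₀}^{t} λ(u; d(x), x) du) f_X(x) dt dx`:
for every measurable regime `d : ℝ^q → [0, a₀]`, `V(d) ≤ V(d₀)`. -/
theorem stmt_1 (q : ℕ) (τ a₀ : ℝ) (ha₀ : 0 ≤ a₀) (hτ : a₀ ≤ τ)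
    (lam0 : ℝ → ℝ) (hlam_meas : Measurable lam0) (hlam_nonneg : ∀ u, 0 ≤ lam0 u)
    (hlam_int : IntervalIntegrable lam0 volume 0 τ)
    (μ0 H0 d0 : (Fin q → ℝ) → ℝ)
    (hμ0 : Measurable μ0) (hH0 : Measurable H0) (hH0_nonneg : ∀ x, 0 ≤ H0 x)
    (hd0 : Measurable d0) (hd0_range : ∀ x, d0 x ∈ Set.Icc 0 a₀)
    (Q : ℝ → ℝ) (hQmeas : Measurable Q) (hQ : ∀ u, Q 0 ≤ Q u)
    (fX : (Fin q → ℝ) → ℝ) (hfX : Measurable fX) (hfX_nonneg : ∀ x, 0 ≤ fX x)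
    (hfX_int : Integrable fX)
    (d : (Fin q → ℝ) → ℝ) (hd : Measurable d) (hd_range : ∀ x, d x ∈ Set.Icc 0 a₀) :
    (∫ x : Fin q → ℝ,
        (∫ t in a₀..τ, Real.exp (- ∫ u in a₀..t,
            lam0 u * Real.exp (μ0 x + (if d x ≤ u then Q (d x - d0 x) * H0 x else 0))))
          * fX x)
      ≤ ∫ x : Fin q → ℝ,
          (∫ t in a₀..τ, Real.exp (- ∫ u in a₀..t,
              lam0 u * Real.exp (μ0 x + (if d0 x ≤ u then Q (d0 x - d0 x) * H0 x else 0))))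
            * fX x := by
  -- the primitive of lam0
  set L : ℝ → ℝ := fun t => ∫ u in a₀..t, lam0 u with hL
  have huIcc : Set.uIcc a₀ τ = Set.Icc a₀ τ := Set.uIcc_of_le hτ
  have hlam_intIoc : IntegrableOn lam0 (Set.Ioc a₀ τ) volume := by
    have h1 : IntervalIntegrable lam0 volume a₀ τ :=
      hlam_int.mono_set (by rw [huIcc, Set.uIcc_of_le (ha₀.trans hτ)]
                            exact Set.Icc_subset_Icc ha₀ le_rfl)
    exact (intervalIntegrable_iff_integrableOn_Ioc_of_le hτ).mp h1
  have hlam_int' : IntegrableOn lam0 (Set.uIcc a₀ τ) volume := by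
    rw [huIcc, integrableOn_Icc_iff_integrableOn_Ioc]
    exact hlam_intIoc
  have hLcont : ContinuousOn L (Set.Icc a₀ τ) := by
    rw [← huIcc]
    exact intervalIntegral.continuousOn_primitive_interval hlam_int'
  have hLnonneg : ∀ t ∈ Set.Icc a₀ τ, 0 ≤ L t := fun t ht =>
    intervalIntegral.integral_nonneg ht.1 (fun u _ => hlam_nonneg u)
  -- rewriting lemma
  have key : ∀ (e : (Fin q → ℝ) → ℝ), (∀ x, e x ∈ Set.Icc 0 a₀) → ∀ x,
      (∫ t in a₀..τ, Real.exp (- ∫ u in a₀..t,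
          lam0 u * Real.exp (μ0 x + (if e x ≤ u then Q (e x - d0 x) * H0 x else 0))))
      = ∫ t in a₀..τ, Real.exp (-(Real.exp (μ0 x + Q (e x - d0 x) * H0 x) * L t)) := by
    intro e he x
    refine intervalIntegral.integral_congr fun t ht => ?_
    rw [huIcc] at ht
    have inner : (∫ u in a₀..t,
        lam0 u * Real.exp (μ0 x + (if e x ≤ u then Q (e x - d0 x) * H0 x else 0)))
        = Real.exp (μ0 x + Q (e x - d0 x) * H0 x) * L t := by
      rw [show (Real.exp (μ0 x + Q (e x - d0 x) * H0 x) * L t)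
          = ∫ u in a₀..t, Real.exp (μ0 x + Q (e x - d0 x) * H0 x) * lam0 u
        from (intervalIntegral.integral_const_mul _ _).symm]
      refine intervalIntegral.integral_congr fun u hu => ?_
      rw [Set.uIcc_of_le ht.1] at hu
      have h3 : e x ≤ u := le_trans (he x).2 hu.1
      rw [if_pos h3, mul_comm]
    rw [inner]
  rw [show (fun x : Fin q → ℝ =>
      (∫ t in a₀..τ, Real.exp (- ∫ u in a₀..t,
          lam0 u * Real.exp (μ0 x + (if d x ≤ u then Q (d x - d0 x) * H0 x else 0)))) * fX x)
      = fun x => (∫ t in a₀..τ,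
          Real.exp (-(Real.exp (μ0 x + Q (d x - d0 x) * H0 x) * L t))) * fX x
    from funext fun x => by rw [key d hd_range x]]
  rw [show (fun x : Fin q → ℝ =>
      (∫ t in a₀..τ, Real.exp (- ∫ u in a₀..t,
          lam0 u * Real.exp (μ0 x + (if d0 x ≤ u then Q (d0 x - d0 x) * H0 x else 0)))) * fX x)
      = fun x => (∫ t in a₀..τ,
          Real.exp (-(Real.exp (μ0 x + Q 0 * H0 x) * L t))) * fX x
    from funext fun x => by rw [key d0 hd0_range x, sub_self]]
  -- integrability of each inner integrand in t
  have hint : ∀ c : ℝ, IntervalIntegrable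
      (fun t => Real.exp (-(c * L t))) volume a₀ τ := by
    intro c
    apply ContinuousOn.intervalIntegrable
    rw [huIcc]
    exact Real.continuous_exp.comp_continuousOn ((continuousOn_const.mul hLcont).neg)
  -- pointwise inequality for inner integrals
  have hpt : ∀ x : Fin q → ℝ,
      (∫ t in a₀..τ, Real.exp (-(Real.exp (μ0 x + Q (d x - d0 x) * H0 x) * L t)))
      ≤ ∫ t in a₀..τ, Real.exp (-(Real.exp (μ0 x + Q 0 * H0 x) * L t)) := by
    intro x
    apply intervalIntegral.integral_mono_on hτ (hint _) (hint _)
    intro t ht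
    apply Real.exp_le_exp.mpr
    rw [neg_le_neg_iff]
    apply mul_le_mul_of_nonneg_right _ (hLnonneg t ht)
    apply Real.exp_le_exp.mpr
    exact add_le_add le_rfl (mul_le_mul_of_nonneg_right (hQ _) (hH0_nonneg x))
  -- bound for inner integrals : in [0, τ - a₀]
  have hbound : ∀ (c : ℝ), 0 ≤ c →
      (∫ t in a₀..τ, Real.exp (-(c * L t))) ∈ Set.Icc 0 (τ - a₀) := by
    intro c hc
    constructor
    · exact intervalIntegral.integral_nonneg hτ (fun t _ => (Real.exp_pos _).le)
    · have h1 : (∫ t in a₀..τ, Real.exp (-(c * L t))) ≤ ∫ _t in a₀..τ, (1 : ℝ) := by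
        apply intervalIntegral.integral_mono_on hτ (hint _) intervalIntegrable_const
        intro t ht
        rw [Real.exp_le_one_iff, neg_nonpos]
        exact mul_nonneg hc (hLnonneg t ht)
      simpa using h1
  -- a measurable version of L agreeing on (a₀, τ]
  set L' : ℝ → ℝ := fun t => ∫ u in Set.Ioc a₀ (min t τ), lam0 u with hL'
  have hL'mono : Monotone L' := by
    intro s t hst
    apply setIntegral_mono_set
      (hlam_intIoc.mono_set (Set.Ioc_subset_Ioc le_rfl (min_le_right _ _)))
      (Filter.Eventually.of_forall fun u => hlam_nonneg u)
    exact Filter.Eventually.of_forall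
      (Set.Ioc_subset_Ioc le_rfl (min_le_min_right _ hst))
  have hL'meas : Measurable L' := hL'mono.measurable
  have hLL' : ∀ t ∈ Set.Ioc a₀ τ, L t = L' t := by
    intro t ht
    show (∫ u in a₀..t, lam0 u) = ∫ u in Set.Ioc a₀ (min t τ), lam0 u
    rw [intervalIntegral.integral_of_le ht.1.le, min_eq_left ht.2]
  -- the RHS function, rewritten with L'
  have keyR : ∀ x : Fin q → ℝ,
      (∫ t in a₀..τ, Real.exp (-(Real.exp (μ0 x + Q 0 * H0 x) * L t)))
      = ∫ t in Set.Ioc a₀ τ, Real.exp (-(Real.exp (μ0 x + Q 0 * H0 x) * L' t)) := by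
    intro x
    rw [intervalIntegral.integral_of_le hτ]
    apply setIntegral_congr_fun measurableSet_Ioc
    intro t ht
    simp only [hLL' t ht]
  -- measurability of the RHS integrand in x
  have hC0 : Measurable fun x : Fin q → ℝ => Real.exp (μ0 x + Q 0 * H0 x) :=
    (hμ0.add (hH0.const_mul _)).exp
  have hmeasR : AEStronglyMeasurable (fun x : Fin q → ℝ =>
      (∫ t in a₀..τ, Real.exp (-(Real.exp (μ0 x + Q 0 * H0 x) * L t))) * fX x) volume := by
    have h1 : StronglyMeasurable (fun x : Fin q → ℝ =>
        ∫ t in Set.Ioc a₀ τ, Real.exp (-(Real.exp (μ0 x + Q 0 * H0 x) * L' t))) := by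
      apply MeasureTheory.StronglyMeasurable.integral_prod_right
        (f := fun x t => Real.exp (-(Real.exp (μ0 x + Q 0 * H0 x) * L' t)))
      apply Measurable.stronglyMeasurable
      exact (((hC0.comp measurable_fst).mul
        (hL'meas.comp measurable_snd)).neg).exp
    have h2 : (fun x : Fin q → ℝ =>
        (∫ t in a₀..τ, Real.exp (-(Real.exp (μ0 x + Q 0 * H0 x) * L t))) * fX x)
        = fun x => (∫ t in Set.Ioc a₀ τ,
            Real.exp (-(Real.exp (μ0 x + Q 0 * H0 x) * L' t))) * fX x :=
      funext fun x => by rw [keyR x]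
    rw [h2]
    exact (h1.measurable.mul hfX).aestronglyMeasurable
  -- integrability of the RHS
  have hintR : Integrable (fun x : Fin q → ℝ =>
      (∫ t in a₀..τ, Real.exp (-(Real.exp (μ0 x + Q 0 * H0 x) * L t))) * fX x) volume := by
    apply Integrable.mono' (hfX_int.const_mul (τ - a₀)) hmeasR
    apply Filter.Eventually.of_forall
    intro x
    have hb := hbound (Real.exp (μ0 x + Q 0 * H0 x)) (Real.exp_pos _).le
    rw [Real.norm_eq_abs, abs_mul, abs_of_nonneg hb.1, abs_of_nonneg (hfX_nonneg x)]
    exact mul_le_mul_of_nonneg_right hb.2 (hfX_nonneg x)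
  -- final comparison
  apply integral_mono_of_nonneg _ hintR
  · apply Filter.Eventually.of_forall
    intro x
    exact mul_le_mul_of_nonneg_right (hpt x) (hfX_nonneg x)
  · apply Filter.Eventually.of_forall
    intro x
    exact mul_nonneg
      (intervalIntegral.integral_nonneg hτ (fun t _ => (Real.exp_pos _).le))
      (hfX_nonneg x)
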